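/- Let β > 0, assume 0 < a_1, a_3 < ∞ and 0 < b_1 < ∞, and fix an integer k ≥ 2. Suppose that conditionally on (X_1, Y_1): Λ_1 is Poisson with mean X_1 β^{-1/2} b_1; Λ_0 is Poisson with mean Y_1 β^{1/2} a_1; d_* = Σ_{j=1}^{Λ_0} τ_j with (τ_j) i.i.d. as in the context; and d_* and Λ_1 are conditionally independent. Then E[ X_1^3 Y_1 · P(d_* + Λ_1 = k−2 | X_1, Y_1) ] = a_3 b_1 · P(d_*^{(1)} + Λ_1^{(3)} = k−2), where d_*^{(1)} and Λ_1^{(3)} are independent. -/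

import Mathlib

open MeasureTheory ProbabilityTheory Filter Real Topology

noncomputable section

namespace RIG

/-- Poisson probability with mean `a`. -/
def pois (a : ℝ) (s : ℕ) : ℝ := Real.exp (-a) * a ^ s / (s.factorial : ℝ)

/-- `r`-th moment of a distribution on ℝ (so `mom PX r = a_r`, `mom PY r = b_r`). -/
def mom (P : Measure ℝ) (r : ℕ) : ℝ := ∫ x, x ^ r ∂P

/-- λ₁(x) = x β^{-1/2} b₁ : the (conditional) Poisson mean attached to an attribute
of weight `x`. -/
def lamX (PY : Measure ℝ) (β x : ℝ) : ℝ := x * (Real.sqrt β)⁻¹ * mom PY 1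

/-- λ₀(y) = y β^{1/2} a₁ : the (conditional) Poisson mean attached to a vertex
of weight `y`. -/
def lamY (PX : Measure ℝ) (β y : ℝ) : ℝ := y * Real.sqrt β * mom PX 1

/-- pmf of the size-biased mixed Poisson variable Λ₁^{(r)}:
`P(Λ₁^{(r)} = s) = (E λ₁^r)⁻¹ E (e^{-λ₁} λ₁^{s+r} / s!)`, where `λ₁ = X₁ β^{-1/2} b₁`. -/
def pLamX (PX PY : Measure ℝ) (β : ℝ) (r s : ℕ) : ℝ :=
  (∫ x, lamX PY β x ^ r ∂PX)⁻¹ *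
    ∫ x, Real.exp (-lamX PY β x) * lamX PY β x ^ (s + r) / (s.factorial : ℝ) ∂PX

/-- pmf of the size-biased mixed Poisson variable Λ₀^{(r)}:
`P(Λ₀^{(r)} = s) = (E λ₀^r)⁻¹ E (e^{-λ₀} λ₀^{s+r} / s!)`, where `λ₀ = Y₁ β^{1/2} a₁`. -/
def pLamY (PX PY : Measure ℝ) (β : ℝ) (r s : ℕ) : ℝ :=
  (∫ y, lamY PX β y ^ r ∂PY)⁻¹ *
    ∫ y, Real.exp (-lamY PX β y) * lamY PX β y ^ (s + r) / (s.factorial : ℝ) ∂PY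

/-- `E Λ₁`. -/
def eLamX (PX PY : Measure ℝ) (β : ℝ) : ℝ := ∑' s : ℕ, (s : ℝ) * pLamX PX PY β 0 s

/-- pmf of τ: `P(τ = s) = ((s+1)/E Λ₁) P(Λ₁ = s+1)`. -/
def pTau (PX PY : Measure ℝ) (β : ℝ) (s : ℕ) : ℝ :=
  (((s : ℝ) + 1) / eLamX PX PY β) * pLamX PX PY β 0 (s + 1)

/-- pmf of `τ₁ + ⋯ + τ_i` for i.i.d. τⱼ (i-fold convolution of `pTau`). -/
def pTauConv (PX PY : Measure ℝ) (β : ℝ) : ℕ → ℕ → ℝ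
  | 0, s => if s = 0 then 1 else 0
  | i + 1, s =>
      ∑ j ∈ Finset.range (s + 1), pTauConv PX PY β i j * pTau PX PY β (s - j)

/-- pmf of the randomly stopped sum `d_*^{(r)} = Σ_{j=1}^{Λ₀^{(r)}} τ_j`
(with the τⱼ i.i.d. and independent of Λ₀^{(r)}). -/
def pDstar (PX PY : Measure ℝ) (β : ℝ) (r s : ℕ) : ℝ :=
  ∑' i : ℕ, pLamY PX PY β r i * pTauConv PX PY β i s

/-- pmf of `d_* = Σ_{j=1}^{Λ₀} τ_j` conditionally on `Y₁ = y`
(so that Λ₀ is Poisson with mean `λ₀(y)`, independent of the τⱼ). -/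
def pDstarCond (PX PY : Measure ℝ) (β y : ℝ) (s : ℕ) : ℝ :=
  ∑' i : ℕ, pois (lamY PX β y) i * pTauConv PX PY β i s

/-- pmf of `d_*^{(1)} + Λ₁^{(3)}` for independent summands. -/
def pSumA (PX PY : Measure ℝ) (β : ℝ) (s : ℕ) : ℝ :=
  ∑ p ∈ Finset.range (s + 1), pDstar PX PY β 1 p * pLamX PX PY β 3 (s - p)

/-- pmf of `d_*^{(2)} + Λ₁^{(2)} + Λ₂^{(2)}` for independent summands,
`Λ₂^{(2)}` being distributed as `Λ₁^{(2)}`. -/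
def pSumB (PX PY : Measure ℝ) (β : ℝ) (s : ℕ) : ℝ :=
  ∑ p ∈ Finset.range (s + 1), ∑ q ∈ Finset.range (s - p + 1),
    pDstar PX PY β 2 p * pLamX PX PY β 2 q * pLamX PX PY β 2 (s - p - q)

/-- Tail sum `Σ_{i ≥ k} f i` of a pmf `f`. -/
def tailSum (f : ℕ → ℝ) (k : ℕ) : ℝ := ∑' i : ℕ, f (k + i)

/-- `a(k) = a₃ b₁³ P(d_*^{(1)} + Λ₁^{(3)} = k - 2)`. -/
def aFun (PX PY : Measure ℝ) (β : ℝ) (k : ℕ) : ℝ :=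
  mom PX 3 * mom PY 1 ^ 3 * pSumA PX PY β (k - 2)

/-- `b(k) = a₂² b₁² b₂ P(d_*^{(2)} + Λ₁^{(2)} + Λ₂^{(2)} = k - 2)`. -/
def bFun (PX PY : Measure ℝ) (β : ℝ) (k : ℕ) : ℝ :=
  mom PX 2 ^ 2 * mom PY 1 ^ 2 * mom PY 2 * pSumB PX PY β (k - 2)

/-- `A(k) = a₃ b₁³ P(d_*^{(1)} + Λ₁^{(3)} ≥ k - 2)`. -/
def AFun (PX PY : Measure ℝ) (β : ℝ) (k : ℕ) : ℝ :=
  mom PX 3 * mom PY 1 ^ 3 * tailSum (pSumA PX PY β) (k - 2)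

/-- `B(k) = a₂² b₁² b₂ P(d_*^{(2)} + Λ₁^{(2)} + Λ₂^{(2)} ≥ k - 2)`. -/
def BFun (PX PY : Measure ℝ) (β : ℝ) (k : ℕ) : ℝ :=
  mom PX 2 ^ 2 * mom PY 1 ^ 2 * mom PY 2 * tailSum (pSumB PX PY β) (k - 2)

section AuxLemmas

open Finset

lemma tsum_exp_div (a : ℝ) : ∑' n : ℕ, a ^ n / (Nat.factorial n : ℝ) = Real.exp a := by
  rw [Real.exp_eq_exp_ℝ, NormedSpace.exp_eq_tsum_div]

lemma pois_nonneg {a : ℝ} (ha : 0 ≤ a) (s : ℕ) : 0 ≤ pois a s := by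
  unfold pois; positivity

lemma pois_abs_le (a : ℝ) (s : ℕ) :
    |pois a s| ≤ Real.exp (-a) * (|a| ^ s / (Nat.factorial s : ℝ)) := by
  unfold pois
  rw [abs_div, abs_mul, abs_of_nonneg (Real.exp_nonneg _), abs_pow,
    Nat.abs_cast, mul_div_assoc]

lemma summable_pois (a : ℝ) : Summable (pois a) := by
  refine Summable.of_norm_bounded
    ((Real.summable_pow_div_factorial |a|).mul_left (Real.exp (-a))) fun s => ?_
  simpa [mul_div_assoc] using pois_abs_le a s

lemma tsum_pois (a : ℝ) : ∑' s : ℕ, pois a s = 1 := by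
  have : ∀ s : ℕ, pois a s = Real.exp (-a) * (a ^ s / (Nat.factorial s : ℝ)) := by
    intro s; unfold pois; rw [mul_div_assoc]
  rw [tsum_congr this, tsum_mul_left, tsum_exp_div, ← Real.exp_add]
  simp

lemma sum_pois_le_one {a : ℝ} (ha : 0 ≤ a) (n : ℕ) :
    ∑ i ∈ Finset.range n, pois a i ≤ 1 := by
  calc ∑ i ∈ Finset.range n, pois a i
      ≤ ∑' i : ℕ, pois a i :=
        Summable.sum_le_tsum _ (fun i _ => pois_nonneg ha i) (summable_pois a)
    _ = 1 := tsum_pois a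

lemma pois_le_one {a : ℝ} (ha : 0 ≤ a) (s : ℕ) : pois a s ≤ 1 := by
  calc pois a s ≤ ∑ i ∈ Finset.range (s + 1), pois a i :=
        Finset.single_le_sum (fun i _ => pois_nonneg ha i) (Finset.self_mem_range_succ s)
    _ ≤ 1 := sum_pois_le_one ha _

lemma pois_succ_mul (a : ℝ) (i : ℕ) : ((i : ℝ) + 1) * pois a (i + 1) = a * pois a i := by
  unfold pois
  have h1 : ((i : ℝ) + 1) ≠ 0 := by positivity
  have h2 : (Nat.factorial i : ℝ) ≠ 0 := Nat.cast_ne_zero.2 i.factorial_ne_zero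
  rw [Nat.factorial_succ]
  push_cast
  field_simp
  ring

lemma sum_mul_pois_le {a : ℝ} (ha : 0 ≤ a) (n : ℕ) :
    ∑ s ∈ Finset.range n, (s : ℝ) * pois a s ≤ a := by
  cases n with
  | zero => simpa using ha
  | succ m =>
    rw [Finset.sum_range_succ']
    have h0 : ((0 : ℕ) : ℝ) * pois a 0 = 0 := by simp
    rw [h0, add_zero]
    have : ∀ i : ℕ, ((i + 1 : ℕ) : ℝ) * pois a (i + 1) = a * pois a i := by
      intro i; push_cast; exact pois_succ_mul a i
    rw [Finset.sum_congr rfl fun i _ => this i, ← Finset.mul_sum]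
    calc a * ∑ i ∈ Finset.range m, pois a i ≤ a * 1 :=
          mul_le_mul_of_nonneg_left (sum_pois_le_one ha m) ha
      _ = a := mul_one a

end AuxLemmas

end RIG

open RIG

/-- formula (21) of the paper:
`E(X₁³ Y₁ P(d_* + Λ₁ = k−2 | X₁, Y₁)) = a₃ b₁ P(d_*^{(1)} + Λ₁^{(3)} = k−2)`,
where conditionally on `(X₁, Y₁)` the variable `Λ₁` is Poisson with mean
`X₁ β^{-1/2} b₁`, `Λ₀` is Poisson with mean `Y₁ β^{1/2} a₁`,
`d_* = Σ_{j=1}^{Λ₀} τ_j`, and `d_*` and `Λ₁` are conditionally independent;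
`d_*^{(1)}` and `Λ₁^{(3)}` are independent. -/
theorem statement15
    (PX PY : Measure ℝ) [IsProbabilityMeasure PX] [IsProbabilityMeasure PY]
    (hXnn : PX {x | x < 0} = 0) (hYnn : PY {y | y < 0} = 0)
    (β : ℝ) (hβ : 0 < β)
    (ha1 : Integrable (fun x : ℝ => x) PX) (ha1pos : 0 < mom PX 1)
    (ha3 : Integrable (fun x : ℝ => x ^ 3) PX) (ha3pos : 0 < mom PX 3)
    (hb1 : Integrable (fun y : ℝ => y) PY) (hb1pos : 0 < mom PY 1)
    (k : ℕ) (hk : 2 ≤ k) :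
    ∫ x, ∫ y, x ^ 3 * y *
        (∑ p ∈ Finset.range (k - 2 + 1),
          pDstarCond PX PY β y p * pois (lamX PY β x) (k - 2 - p)) ∂PY ∂PX =
      mom PX 3 * mom PY 1 * pSumA PX PY β (k - 2) := by
  classical
  have haeX : ∀ᵐ x ∂PX, (0:ℝ) ≤ x := by
    rw [ae_iff]; simpa only [not_le] using hXnn
  have haeY : ∀ᵐ y ∂PY, (0:ℝ) ≤ y := by
    rw [ae_iff]; simpa only [not_le] using hYnn
  have hsβ : (0:ℝ) < Real.sqrt β := Real.sqrt_pos.2 hβ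
  set cX : ℝ := (Real.sqrt β)⁻¹ * mom PY 1 with hcX
  set cY : ℝ := Real.sqrt β * mom PX 1 with hcY
  have hcXpos : 0 < cX := mul_pos (inv_pos.2 hsβ) hb1pos
  have hcYpos : 0 < cY := mul_pos hsβ ha1pos
  have hlamX : ∀ x : ℝ, lamX PY β x = x * cX := fun x => by
    simp only [lamX, hcX]; ring
  have hlamY : ∀ y : ℝ, lamY PX β y = y * cY := fun y => by
    simp only [lamY, hcY]; ring
  have hlX : ∀ᵐ x ∂PX, 0 ≤ lamX PY β x :=
    haeX.mono fun x hx => by rw [hlamX]; exact mul_nonneg hx hcXpos.le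
  have hlY : ∀ᵐ y ∂PY, 0 ≤ lamY PX β y :=
    haeY.mono fun y hy => by rw [hlamY]; exact mul_nonneg hy hcYpos.le
  -- measurability
  have hmX : ∀ s : ℕ, Measurable fun x : ℝ => pois (lamX PY β x) s := by
    intro s; unfold pois lamX; fun_prop
  have hmY : ∀ i : ℕ, Measurable fun y : ℝ => pois (lamY PX β y) i := by
    intro i; unfold pois lamY; fun_prop
  -- integrability on the x side
  have hpoisXint : ∀ s, Integrable (fun x => pois (lamX PY β x) s) PX := by
    intro s
    refine (integrable_const (1:ℝ)).mono ((hmX s).aestronglyMeasurable) ?_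
    filter_upwards [hlX] with x hl
    rw [Real.norm_eq_abs, abs_of_nonneg (pois_nonneg hl s), norm_one]
    exact pois_le_one hl s
  have hX3int : ∀ s, Integrable (fun x => x ^ 3 * pois (lamX PY β x) s) PX := by
    intro s
    refine ha3.mono (((measurable_id.pow_const 3).mul (hmX s)).aestronglyMeasurable) ?_
    filter_upwards [hlX] with x hl
    rw [Real.norm_eq_abs, Real.norm_eq_abs, abs_mul, abs_of_nonneg (pois_nonneg hl s)]
    exact mul_le_of_le_one_right (abs_nonneg _) (pois_le_one hl s)
  have hlamXint : Integrable (fun x => lamX PY β x) PX := by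
    unfold lamX; exact (ha1.mul_const _).mul_const _
  -- step A : the x-side moment identity
  have hmomX3 : ∫ x, lamX PY β x ^ 3 ∂PX = cX ^ 3 * mom PX 3 := by
    simp only [mom]
    rw [← integral_const_mul]
    refine integral_congr_ae (Filter.Eventually.of_forall fun x => ?_)
    simp only [hlamX]; ring
  have stepA : ∀ s : ℕ, mom PX 3 * pLamX PX PY β 3 s
      = ∫ x, x ^ 3 * pois (lamX PY β x) s ∂PX := by
    intro s
    have h2 : ∫ x, Real.exp (-lamX PY β x) * lamX PY β x ^ (s + 3) / (s.factorial : ℝ) ∂PX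
        = cX ^ 3 * ∫ x, x ^ 3 * pois (lamX PY β x) s ∂PX := by
      rw [← integral_const_mul]
      refine integral_congr_ae (Filter.Eventually.of_forall fun x => ?_)
      simp only [pois, hlamX, pow_add]
      ring
    have ha3ne : mom PX 3 ≠ 0 := ha3pos.ne'
    have hcne : cX ≠ 0 := hcXpos.ne'
    unfold pLamX
    rw [hmomX3, h2]
    field_simp
  -- step By : the y-side per-index moment identity
  have hmomY1 : ∫ y, lamY PX β y ^ 1 ∂PY = cY * mom PY 1 := by
    simp only [mom]
    rw [← integral_const_mul]
    refine integral_congr_ae (Filter.Eventually.of_forall fun y => ?_)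
    simp only [hlamY]; ring
  have stepBy : ∀ i : ℕ, mom PY 1 * pLamY PX PY β 1 i
      = ∫ y, y * pois (lamY PX β y) i ∂PY := by
    intro i
    have h2 : ∫ y, Real.exp (-lamY PX β y) * lamY PX β y ^ (i + 1) / (i.factorial : ℝ) ∂PY
        = cY * ∫ y, y * pois (lamY PX β y) i ∂PY := by
      rw [← integral_const_mul]
      refine integral_congr_ae (Filter.Eventually.of_forall fun y => ?_)
      simp only [pois, hlamY, pow_succ]
      ring
    have hb1ne : mom PY 1 ≠ 0 := hb1pos.ne'
    have hcne : cY ≠ 0 := hcYpos.ne'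
    unfold pLamY
    rw [hmomY1, h2]
    field_simp
  -- facts about q s = pLamX 0 s and pTau
  have hq : ∀ t : ℕ, pLamX PX PY β 0 t = ∫ x, pois (lamX PY β x) t ∂PX := by
    intro t; simp [pLamX, pois]
  have hq_nonneg : ∀ t, 0 ≤ pLamX PX PY β 0 t := fun t => by
    rw [hq]
    exact integral_nonneg_of_ae (hlX.mono fun x hx => pois_nonneg hx t)
  have hsum_q : ∀ n, ∑ s ∈ Finset.range n, (s:ℝ) * pLamX PX PY β 0 s
      ≤ ∫ x, lamX PY β x ∂PX := by
    intro n
    have h1 : ∑ s ∈ Finset.range n, (s:ℝ) * pLamX PX PY β 0 s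
        = ∫ x, ∑ s ∈ Finset.range n, (s:ℝ) * pois (lamX PY β x) s ∂PX := by
      rw [integral_finset_sum _ (fun s _ => (hpoisXint s).const_mul _)]
      exact Finset.sum_congr rfl fun s _ => by rw [hq s, integral_const_mul]
    rw [h1]
    refine integral_mono_ae
      (integrable_finset_sum _ (fun s _ => (hpoisXint s).const_mul _)) hlamXint ?_
    exact hlX.mono fun x hx => sum_mul_pois_le hx n
  have hq_summable : Summable (fun s : ℕ => (s:ℝ) * pLamX PX PY β 0 s) :=
    summable_of_sum_range_le
      (fun s => mul_nonneg (Nat.cast_nonneg s) (hq_nonneg s)) hsum_q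
  have heLam_nonneg : 0 ≤ eLamX PX PY β :=
    tsum_nonneg fun s => mul_nonneg (Nat.cast_nonneg s) (hq_nonneg s)
  have hTau_nonneg : ∀ t, 0 ≤ pTau PX PY β t := fun t =>
    mul_nonneg (div_nonneg (by positivity) heLam_nonneg) (hq_nonneg (t+1))
  have hsumTau : ∀ n, ∑ t ∈ Finset.range n, pTau PX PY β t ≤ 1 := by
    intro n
    rcases eq_or_lt_of_le heLam_nonneg with h0 | hpos
    · simp [pTau, ← h0]
    · have h' : ∑ u ∈ Finset.range (n+1), (u:ℝ) * pLamX PX PY β 0 u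
          = ∑ t ∈ Finset.range n, ((t:ℝ)+1) * pLamX PX PY β 0 (t+1) := by
        rw [Finset.sum_range_succ']; push_cast; simp
      have hkey : ∑ t ∈ Finset.range n, ((t:ℝ)+1) * pLamX PX PY β 0 (t+1)
          ≤ eLamX PX PY β := by
        rw [← h']
        exact Summable.sum_le_tsum _
          (fun u _ => mul_nonneg (Nat.cast_nonneg u) (hq_nonneg u)) hq_summable
      calc ∑ t ∈ Finset.range n, pTau PX PY β t
          = (∑ t ∈ Finset.range n, ((t:ℝ)+1) * pLamX PX PY β 0 (t+1)) / eLamX PX PY β := by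
            rw [Finset.sum_div]
            exact Finset.sum_congr rfl fun t _ => by simp only [pTau]; ring
        _ ≤ 1 := by rw [div_le_one hpos]; exact hkey
  have hT_nonneg : ∀ i s, 0 ≤ pTauConv PX PY β i s := by
    intro i
    induction i with
    | zero => intro s; simp only [pTauConv]; split <;> norm_num
    | succ i ih =>
      intro s
      simp only [pTauConv]
      exact Finset.sum_nonneg fun j _ => mul_nonneg (ih j) (hTau_nonneg _)
  have hT_le_one : ∀ i s, pTauConv PX PY β i s ≤ 1 := by
    intro i
    induction i with
    | zero => intro s; simp only [pTauConv]; split <;> norm_num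
    | succ i ih =>
      intro s
      simp only [pTauConv]
      have hrefl : ∑ j ∈ Finset.range (s+1), pTau PX PY β (s - j)
          = ∑ t ∈ Finset.range (s+1), pTau PX PY β t := by
        have := Finset.sum_range_reflect (fun t => pTau PX PY β t) (s+1)
        simpa using this
      calc ∑ j ∈ Finset.range (s+1), pTauConv PX PY β i j * pTau PX PY β (s - j)
          ≤ ∑ j ∈ Finset.range (s+1), pTau PX PY β (s - j) := by
            refine Finset.sum_le_sum fun j _ => ?_
            calc pTauConv PX PY β i j * pTau PX PY β (s - j)
                ≤ 1 * pTau PX PY β (s - j) :=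
                  mul_le_mul_of_nonneg_right (ih j) (hTau_nonneg _)
              _ = pTau PX PY β (s - j) := one_mul _
        _ = ∑ t ∈ Finset.range (s+1), pTau PX PY β t := hrefl
        _ ≤ 1 := hsumTau (s+1)
  -- pDstarCond facts
  have hsummable_cond : ∀ (a : ℝ) (p : ℕ),
      Summable (fun i => pois a i * pTauConv PX PY β i p) := by
    intro a p
    refine Summable.of_norm_bounded
      ((Real.summable_pow_div_factorial |a|).mul_left (Real.exp (-a))) fun i => ?_
    rw [norm_mul, Real.norm_eq_abs, Real.norm_eq_abs, abs_of_nonneg (hT_nonneg i p)]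
    calc |pois a i| * pTauConv PX PY β i p ≤ |pois a i| * 1 :=
          mul_le_mul_of_nonneg_left (hT_le_one i p) (abs_nonneg _)
      _ = |pois a i| := mul_one _
      _ ≤ Real.exp (-a) * (|a| ^ i / (i.factorial : ℝ)) := pois_abs_le a i
  have hcond_nonneg : ∀ (y : ℝ), 0 ≤ lamY PX β y → ∀ p,
      0 ≤ pDstarCond PX PY β y p := by
    intro y hy p
    exact tsum_nonneg fun i => mul_nonneg (pois_nonneg hy i) (hT_nonneg i p)
  have hcond_le_one : ∀ (y : ℝ), 0 ≤ lamY PX β y → ∀ p,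
      pDstarCond PX PY β y p ≤ 1 := by
    intro y hy p
    calc pDstarCond PX PY β y p ≤ ∑' i : ℕ, pois (lamY PX β y) i := by
          unfold pDstarCond
          refine Summable.tsum_le_tsum (fun i => ?_) (hsummable_cond _ p) (summable_pois _)
          exact mul_le_of_le_one_right (pois_nonneg hy i) (hT_le_one i p)
      _ = 1 := tsum_pois _
  have hmeas_cond : ∀ p, Measurable (fun y => pDstarCond PX PY β y p) := by
    intro p
    have hpart : ∀ n : ℕ, Measurable
        (fun y => ∑ i ∈ Finset.range n, pois (lamY PX β y) i * pTauConv PX PY β i p) :=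
      fun n => Finset.measurable_sum _ (fun i _ => (hmY i).mul_const _)
    refine measurable_of_tendsto_metrizable' atTop hpart ?_
    rw [tendsto_pi_nhds]
    intro y
    exact (hsummable_cond (lamY PX β y) p).hasSum.tendsto_sum_nat
  have hIy : ∀ p, Integrable (fun y => y * pDstarCond PX PY β y p) PY := by
    intro p
    refine hb1.mono ((measurable_id.mul (hmeas_cond p)).aestronglyMeasurable) ?_
    filter_upwards [hlY] with y hly
    rw [Real.norm_eq_abs, Real.norm_eq_abs, abs_mul,
      abs_of_nonneg (hcond_nonneg y hly p)]
    exact mul_le_of_le_one_right (abs_nonneg _) (hcond_le_one y hly p)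
  -- y-side summability
  have hpoisYint : ∀ i, Integrable (fun y => y * pois (lamY PX β y) i) PY := by
    intro i
    refine hb1.mono ((measurable_id.mul (hmY i)).aestronglyMeasurable) ?_
    filter_upwards [hlY] with y hly
    rw [Real.norm_eq_abs, Real.norm_eq_abs, abs_mul, abs_of_nonneg (pois_nonneg hly i)]
    exact mul_le_of_le_one_right (abs_nonneg _) (pois_le_one hly i)
  have hintYpois_nonneg : ∀ i, 0 ≤ ∫ y, y * pois (lamY PX β y) i ∂PY := by
    intro i
    refine integral_nonneg_of_ae ?_
    filter_upwards [haeY, hlY] with y hy hly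
    exact mul_nonneg hy (pois_nonneg hly i)
  have hsumYpois : Summable (fun i => ∫ y, y * pois (lamY PX β y) i ∂PY) := by
    refine summable_of_sum_range_le (c := ∫ y, y ∂PY) hintYpois_nonneg fun n => ?_
    rw [← integral_finset_sum _ (fun i _ => hpoisYint i)]
    refine integral_mono_ae (integrable_finset_sum _ fun i _ => hpoisYint i) hb1 ?_
    filter_upwards [haeY, hlY] with y hy hly
    calc ∑ i ∈ Finset.range n, y * pois (lamY PX β y) i
        = y * ∑ i ∈ Finset.range n, pois (lamY PX β y) i := (Finset.mul_sum _ _ _).symm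
      _ ≤ y * 1 := mul_le_mul_of_nonneg_left (sum_pois_le_one hly n) hy
      _ = y := mul_one y
  -- step B : the y-side identity with the randomly stopped sum
  have stepB : ∀ p, ∫ y, y * pDstarCond PX PY β y p ∂PY
      = mom PY 1 * pDstar PX PY β 1 p := by
    intro p
    have hFint : ∀ i : ℕ, Integrable
        (fun y => y * (pois (lamY PX β y) i * pTauConv PX PY β i p)) PY := by
      intro i
      have heq : (fun y => y * (pois (lamY PX β y) i * pTauConv PX PY β i p))
          = fun y => (y * pois (lamY PX β y) i) * pTauConv PX PY β i p := by
        funext y; ring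
      rw [heq]; exact (hpoisYint i).mul_const _
    have hFsum : Summable (fun i => ∫ y,
        ‖y * (pois (lamY PX β y) i * pTauConv PX PY β i p)‖ ∂PY) := by
      refine Summable.of_nonneg_of_le
        (fun i => integral_nonneg fun y => norm_nonneg _) (fun i => ?_) hsumYpois
      refine integral_mono_ae (hFint i).norm (hpoisYint i) ?_
      filter_upwards [haeY, hlY] with y hy hly
      rw [Real.norm_eq_abs, abs_mul, abs_mul, abs_of_nonneg hy,
        abs_of_nonneg (pois_nonneg hly i), abs_of_nonneg (hT_nonneg i p)]
      exact mul_le_mul_of_nonneg_left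
        (mul_le_of_le_one_right (pois_nonneg hly i) (hT_le_one i p)) hy
    have key := integral_tsum_of_summable_integral_norm hFint hFsum
    calc ∫ y, y * pDstarCond PX PY β y p ∂PY
        = ∫ y, ∑' i : ℕ, y * (pois (lamY PX β y) i * pTauConv PX PY β i p) ∂PY := by
          refine integral_congr_ae (Filter.Eventually.of_forall fun y => ?_)
          unfold pDstarCond
          exact tsum_mul_left.symm
      _ = ∑' i : ℕ, ∫ y, y * (pois (lamY PX β y) i * pTauConv PX PY β i p) ∂PY :=
          key.symm
      _ = ∑' i : ℕ, (mom PY 1 * pLamY PX PY β 1 i) * pTauConv PX PY β i p := by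
          refine tsum_congr fun i => ?_
          rw [stepBy i, ← integral_mul_const]
          refine integral_congr_ae (Filter.Eventually.of_forall fun y => ?_)
          ring
      _ = mom PY 1 * pDstar PX PY β 1 p := by
          unfold pDstar
          rw [← tsum_mul_left]
          exact tsum_congr fun i => by ring
  -- final assembly
  have hfinal : ∀ x : ℝ, ∫ y, x ^ 3 * y *
      (∑ p ∈ Finset.range (k - 2 + 1),
        pDstarCond PX PY β y p * pois (lamX PY β x) (k - 2 - p)) ∂PY
      = ∑ p ∈ Finset.range (k - 2 + 1),
          (x ^ 3 * pois (lamX PY β x) (k - 2 - p)) * (mom PY 1 * pDstar PX PY β 1 p) := by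
    intro x
    have h1 : (fun y => x ^ 3 * y *
        (∑ p ∈ Finset.range (k - 2 + 1),
          pDstarCond PX PY β y p * pois (lamX PY β x) (k - 2 - p)))
        = fun y => ∑ p ∈ Finset.range (k - 2 + 1),
          (x ^ 3 * pois (lamX PY β x) (k - 2 - p)) * (y * pDstarCond PX PY β y p) := by
      funext y
      rw [Finset.mul_sum]
      exact Finset.sum_congr rfl fun p _ => by ring
    rw [h1, integral_finset_sum _ (fun p _ => (hIy p).const_mul _)]
    exact Finset.sum_congr rfl fun p _ => by rw [integral_const_mul, stepB p]
  calc ∫ x, ∫ y, x ^ 3 * y *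
      (∑ p ∈ Finset.range (k - 2 + 1),
        pDstarCond PX PY β y p * pois (lamX PY β x) (k - 2 - p)) ∂PY ∂PX
      = ∫ x, ∑ p ∈ Finset.range (k - 2 + 1),
          (x ^ 3 * pois (lamX PY β x) (k - 2 - p)) * (mom PY 1 * pDstar PX PY β 1 p) ∂PX :=
        integral_congr_ae (Filter.Eventually.of_forall hfinal)
    _ = ∑ p ∈ Finset.range (k - 2 + 1),
          (∫ x, x ^ 3 * pois (lamX PY β x) (k - 2 - p) ∂PX) * (mom PY 1 * pDstar PX PY β 1 p) := by
        rw [integral_finset_sum _ (fun p _ => (hX3int _).mul_const _)]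
        exact Finset.sum_congr rfl fun p _ => integral_mul_const _ _
    _ = mom PX 3 * mom PY 1 * pSumA PX PY β (k - 2) := by
        unfold pSumA
        rw [Finset.mul_sum]
        exact Finset.sum_congr rfl fun p _ => by rw [← stepA]; ring
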